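/- If, in addition, the random vectors (X_i)_{i∈I_1}, …, (X_i)_{i∈I_p} are mutually independent, then for every (λ_1,…,λ_p) ∈ (0,∞)^p, ε(λ_1,…,λ_p) = Σ_{j=1}^p λ_j^{-1} ε_{I_j}(1). -/

import Mathlib

open MeasureTheory ProbabilityTheory Real Filter Topology
open scoped ProbabilityTheory

noncomputable section

/-- Marginal Fréchet-type distribution function `F_i(t) = exp(-σ t^(-1/η))` for `t > 0`. -/
def margF (σ η t : ℝ) : ℝ := if 0 < t then Real.exp (-σ * t ^ (-1 / η)) else 0

/-- Joint distribution function of the random vector `X`. -/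
def jointF {Ω : Type*} [MeasureSpace Ω] {d : ℕ} (X : Fin d → Ω → ℝ) (t : Fin d → ℝ) : ℝ :=
  (ℙ {ω | ∀ i, X i ω ≤ t i}).toReal

/-- Exponent function `ℓ(t) = -ln F_X(t)`. -/
def expo {Ω : Type*} [MeasureSpace Ω] {d : ℕ} (X : Fin d → Ω → ℝ) (t : Fin d → ℝ) : ℝ :=
  -Real.log (jointF X t)

/-- Block maximum `M(I_j) = max_{i ∈ I_j} F_i(X_i)`, where `I_j = {i | B i = j}`. -/
def blockMax {Ω : Type*} [MeasureSpace Ω] {d p : ℕ} (B : Fin d → Fin p) (σ : Fin d → ℝ)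
    (η : ℝ) (X : Fin d → Ω → ℝ) (j : Fin p) (ω : Ω) : ℝ :=
  sSup ((fun i => margF (σ i) η (X i ω)) '' {i | B i = j})

/-- Extremal dependence function
`ε(λ₁,…,λ_p) = E(max_j M(I_j)^(λ_j)) / (1 - E(max_j M(I_j)^(λ_j)))`. -/
def epsFun {Ω : Type*} [MeasureSpace Ω] {d p : ℕ} (B : Fin d → Fin p) (σ : Fin d → ℝ)
    (η : ℝ) (X : Fin d → Ω → ℝ) (l : Fin p → ℝ) : ℝ :=
  (∫ ω, ⨆ j, blockMax B σ η X j ω ^ l j ∂ℙ) /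
    (1 - ∫ ω, ⨆ j, blockMax B σ η X j ω ^ l j ∂ℙ)

/-- Single-block extremal dependence function `ε_{I_j}(λ)`. -/
def epsBlock {Ω : Type*} [MeasureSpace Ω] {d p : ℕ} (B : Fin d → Fin p) (σ : Fin d → ℝ)
    (η : ℝ) (X : Fin d → Ω → ℝ) (j : Fin p) (l : ℝ) : ℝ :=
  (∫ ω, blockMax B σ η X j ω ^ l ∂ℙ) / (1 - ∫ ω, blockMax B σ η X j ω ^ l ∂ℙ)

lemma margF_nonneg (σ η x : ℝ) : 0 ≤ margF σ η x := by
  unfold margF; split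
  · positivity
  · exact le_rfl

lemma margF_lt_one {σ : ℝ} (hσ : 0 < σ) {η : ℝ} (hη : 0 < η) (x : ℝ) : margF σ η x < 1 := by
  unfold margF; split
  · rename_i hx
    apply Real.exp_lt_one_iff.mpr
    have h1 : 0 < x ^ (-1/η) := Real.rpow_pos_of_pos hx _
    nlinarith
  · norm_num

lemma aux_rpow_le_iff {a x η : ℝ} (ha : 0 < a) (hx : 0 < x) (hη : 0 < η) :
    a ≤ x ^ (-1/η) ↔ x ≤ a ^ (-η) := by
  have hz : -1/η < 0 := by
    have h1 : (0:ℝ) < 1/η := by positivity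
    rw [neg_div]; linarith
  have key : (a ^ (-η)) ^ (-1/η) = a := by
    rw [← Real.rpow_mul ha.le]
    have : (-η) * (-1/η) = 1 := by field_simp
    rw [this, Real.rpow_one]
  have h2 := Real.rpow_le_rpow_iff_of_neg (Real.rpow_pos_of_pos ha (-η)) hx hz
  rw [key] at h2
  exact h2

lemma margF_le_iff {σ η u : ℝ} (hσ : 0 < σ) (hη : 0 < η) (hu0 : 0 < u) (hu1 : u < 1) (x : ℝ) :
    margF σ η x ≤ u ↔ x ≤ (-Real.log u) ^ (-η) * σ ^ η := by
  have hlu : 0 < -Real.log u := by have := Real.log_neg hu0 hu1; linarith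
  have hrhs : 0 < (-Real.log u) ^ (-η) * σ ^ η := by positivity
  unfold margF
  split
  · rename_i hx
    rw [← Real.exp_log hu0, Real.exp_le_exp, Real.exp_log hu0]
    have h1 : -σ * x ^ (-1/η) ≤ Real.log u ↔ (-Real.log u)/σ ≤ x ^ (-1/η) := by
      rw [div_le_iff₀ hσ]
      constructor <;> intro h <;> nlinarith
    have ha : (0:ℝ) < (-Real.log u)/σ := by positivity
    rw [h1, aux_rpow_le_iff ha hx hη]
    have key : ((-Real.log u)/σ) ^ (-η) = (-Real.log u) ^ (-η) * σ ^ η := by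
      rw [Real.div_rpow hlu.le hσ.le, Real.rpow_neg hσ.le, div_eq_mul_inv, inv_inv]
    rw [key]
  · rename_i hx
    push_neg at hx
    constructor
    · intro _; linarith
    · intro _; exact hu0.le

lemma integral_of_cdf_rpow {Ω : Type*} [MeasureSpace Ω] [IsProbabilityMeasure (ℙ : Measure Ω)]
    {W : Ω → ℝ} (hWm : Measurable W) (hW0 : ∀ ω, 0 ≤ W ω) (hW1 : ∀ ω, W ω ≤ 1)
    {a : ℝ} (ha : 0 < a)
    (hcdf : ∀ u : ℝ, 0 < u → u < 1 → (ℙ {ω | W ω ≤ u}).toReal = u ^ a) :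
    ∫ ω, W ω = a / (a + 1) := by
  have hWint : Integrable W ℙ := by
    refine (integrable_const (1:ℝ)).mono' hWm.aestronglyMeasurable ?_
    exact ae_of_all _ fun ω => by
      rw [Real.norm_eq_abs, abs_of_nonneg (hW0 ω)]; exact hW1 ω
  rw [hWint.integral_eq_integral_meas_lt (ae_of_all _ hW0)]
  simp only [measureReal_def]
  have hg_eq : ∀ t ∈ Set.Ioc (0:ℝ) 1, (ℙ {ω | t < W ω}).toReal = 1 - t ^ a := by
    intro t ht
    have hset : {ω | t < W ω} = {ω | W ω ≤ t}ᶜ := by ext ω; simp [not_le]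
    have hms : MeasurableSet {ω | W ω ≤ t} := measurableSet_le hWm measurable_const
    rw [hset, prob_compl_eq_one_sub hms]
    rcases eq_or_lt_of_le ht.2 with h1 | h1
    · have huniv : {ω | W ω ≤ t} = Set.univ := by
        ext ω; simp only [Set.mem_setOf_eq, Set.mem_univ, iff_true]
        rw [h1]; exact hW1 ω
      rw [huniv, measure_univ, h1]
      simp [Real.one_rpow]
    · rw [ENNReal.toReal_sub_of_le prob_le_one ENNReal.one_ne_top, ENNReal.toReal_one,
        hcdf t ht.1 h1]
  have hanti : Antitone fun t : ℝ => (ℙ {ω | t < W ω}).toReal := by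
    intro t1 t2 h12
    apply ENNReal.toReal_mono (measure_ne_top _ _)
    exact measure_mono fun ω hω => lt_of_le_of_lt h12 hω
  have hmeasg : Measurable fun t : ℝ => (ℙ {ω | t < W ω}).toReal := hanti.measurable
  have hint1 : IntegrableOn (fun t : ℝ => (ℙ {ω | t < W ω}).toReal) (Set.Ioc 0 1) := by
    have hc : IntegrableOn (fun _ : ℝ => (1:ℝ)) (Set.Ioc (0:ℝ) 1) MeasureTheory.volume :=
      integrableOn_const measure_Ioc_lt_top.ne
    refine hc.mono' (hmeasg.aestronglyMeasurable.restrict) ?_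
    refine ae_of_all _ fun t => ?_
    rw [Real.norm_eq_abs, abs_of_nonneg ENNReal.toReal_nonneg]
    calc (ℙ {ω | t < W ω}).toReal ≤ (ℙ Set.univ).toReal :=
          ENNReal.toReal_mono (measure_ne_top _ _) (measure_mono (Set.subset_univ _))
      _ = 1 := by simp
  have hzeroIoi : Set.EqOn (fun t : ℝ => (ℙ {ω | t < W ω}).toReal) (fun _ => (0:ℝ))
      (Set.Ioi 1) := by
    intro t ht
    have : {ω | t < W ω} = ∅ := by
      ext ω; simp only [Set.mem_setOf_eq, Set.mem_empty_iff_false, iff_false, not_lt]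
      exact le_trans (hW1 ω) (le_of_lt ht)
    simp [this]
  have hint2 : IntegrableOn (fun t : ℝ => (ℙ {ω | t < W ω}).toReal) (Set.Ioi 1) :=
    (integrableOn_zero).congr_fun hzeroIoi.symm measurableSet_Ioi
  have hIoi : Set.Ioc (0:ℝ) 1 ∪ Set.Ioi 1 = Set.Ioi 0 := Set.Ioc_union_Ioi_eq_Ioi zero_le_one
  rw [← hIoi, setIntegral_union (Set.Ioc_disjoint_Ioi le_rfl) measurableSet_Ioi hint1 hint2]
  rw [setIntegral_congr_fun measurableSet_Ioi hzeroIoi, integral_zero, add_zero]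
  rw [setIntegral_congr_fun measurableSet_Ioc hg_eq, ← intervalIntegral.integral_of_le zero_le_one]
  have h1 : IntervalIntegrable (fun t : ℝ => t ^ a) MeasureTheory.volume 0 1 :=
    intervalIntegral.intervalIntegrable_rpow' (by linarith)
  rw [intervalIntegral.integral_sub intervalIntegrable_const h1, intervalIntegral.integral_const,
    integral_rpow (Or.inl (by linarith : (-1:ℝ) < a))]
  rw [Real.one_rpow, Real.zero_rpow (by positivity : a + 1 ≠ 0)]
  have : a + 1 ≠ 0 := by positivity
  field_simp
  simp only [sub_zero, smul_eq_mul, one_mul]; ring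

theorem statement7
    {Ω : Type*} [MeasureSpace Ω] [IsProbabilityMeasure (ℙ : Measure Ω)]
    {d p : ℕ} (hd : 0 < d) (hp : 0 < p)
    (X : Fin d → Ω → ℝ) (hX : ∀ i, Measurable (X i))
    (σ : Fin d → ℝ) (hσ : ∀ i, 0 < σ i)
    (η : ℝ) (hη0 : 0 < η) (hη1 : η ≤ 1)
    (hmarg : ∀ i, ∀ t : ℝ, 0 < t →
      ℙ {ω | X i ω ≤ t} = ENNReal.ofReal (Real.exp (-σ i * t ^ (-1 / η))))
    (hpos : ∀ t : Fin d → ℝ, (∀ i, 0 < t i) → 0 < jointF X t)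
    (hhom : ∀ c : ℝ, 0 < c → ∀ t : Fin d → ℝ, (∀ i, 0 < t i) →
      expo X (fun i => c * t i) = c ^ (-1 / η) * expo X t)
    (B : Fin d → Fin p) (hB : Function.Surjective B)
    (hind : iIndepFun
      (fun j (ω : Ω) (i : {i : Fin d // B i = j}) => X i.1 ω) ℙ)
    (l : Fin p → ℝ) (hl : ∀ j, 0 < l j) :
    epsFun B σ η X l = ∑ j, (l j)⁻¹ * epsBlock B σ η X j 1 := by
  classical
  have hpne : Nonempty (Fin p) := ⟨⟨0, hp⟩⟩
  have hη' : (0:ℝ) < 1/η := by positivity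
  -- the scaling point s i = σ i ^ η
  set s : Fin d → ℝ := fun i => σ i ^ η with hs_def
  have hs : ∀ i, 0 < s i := fun i => Real.rpow_pos_of_pos (hσ i) η
  -- per-block distribution function at scaled points
  set G : Fin p → ℝ → ℝ :=
    fun j c => (ℙ {ω | ∀ i, B i = j → X i ω ≤ c * s i}).toReal with hG_def
  set θ : Fin p → ℝ := fun j => -Real.log (G j 1) with hθ_def
  -- filter finsets
  have hne : ∀ j : Fin p, (Finset.univ.filter fun i => B i = j).Nonempty := by
    intro j
    obtain ⟨i0, hi0⟩ := hB j
    exact ⟨i0, by simp [hi0]⟩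
  -- independence product formula
  have hprod : ∀ t : Fin d → ℝ, ℙ {ω | ∀ i, X i ω ≤ t i}
      = ∏ j, ℙ {ω | ∀ i, B i = j → X i ω ≤ t i} := by
    intro t
    have hsets : ∀ j : Fin p,
        MeasurableSet {f : {i : Fin d // B i = j} → ℝ | ∀ i, f i ≤ t i.1} := by
      intro j
      have : {f : {i : Fin d // B i = j} → ℝ | ∀ i, f i ≤ t i.1}
          = ⋂ i : {i : Fin d // B i = j},
            (fun f : {i : Fin d // B i = j} → ℝ => f i) ⁻¹' Set.Iic (t i.1) := by
        ext f; simp [Set.mem_iInter]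
      rw [this]
      exact MeasurableSet.iInter fun i => measurable_pi_apply i measurableSet_Iic
    have key := hind.measure_inter_preimage_eq_mul (S := Finset.univ)
      (sets := fun j => {f : {i : Fin d // B i = j} → ℝ | ∀ i, f i ≤ t i.1})
      (fun j _ => hsets j)
    have hpre : ∀ j : Fin p, (fun (ω : Ω) (i : {i : Fin d // B i = j}) => X i.1 ω) ⁻¹'
        {f | ∀ i, f i ≤ t i.1} = {ω | ∀ i, B i = j → X i ω ≤ t i} := by
      intro j; ext ω
      simp only [Set.mem_preimage, Set.mem_setOf_eq]
      exact ⟨fun h i hij => h ⟨i, hij⟩, fun h i => h i.1 i.2⟩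
    have hset2 : (⋂ j ∈ Finset.univ, (fun (ω : Ω) (i : {i : Fin d // B i = j}) => X i.1 ω) ⁻¹'
        {f | ∀ i, f i ≤ t i.1}) = {ω | ∀ i, X i ω ≤ t i} := by
      simp only [hpre]
      ext ω
      simp only [Set.mem_iInter, Set.mem_setOf_eq, Finset.mem_univ, Set.iInter_true]
      exact ⟨fun h i => h (B i) i rfl, fun h j i _ => h i⟩
    rw [← hset2, key]
    exact Finset.prod_congr rfl fun j _ => by rw [hpre j]
  -- jointF at block-constant scalings
  have hjointG : ∀ cc : Fin p → ℝ,
      jointF X (fun i => cc (B i) * s i) = ∏ j, G j (cc j) := by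
    intro cc
    have h2 : ∀ j : Fin p, {ω | ∀ i, B i = j → X i ω ≤ cc (B i) * s i}
        = {ω | ∀ i, B i = j → X i ω ≤ cc j * s i} := by
      intro j; ext ω; simp only [Set.mem_setOf_eq]
      constructor
      · intro h i hij; have := h i hij; rwa [hij] at this
      · intro h i hij; rw [hij]; exact h i hij
    rw [jointF, hprod, ENNReal.toReal_prod]
    exact Finset.prod_congr rfl fun j _ => by rw [h2 j]
  -- bounds on G
  have hGle1 : ∀ j c, G j c ≤ 1 := by
    intro j c
    simp only [hG_def]
    calc (ℙ {ω | ∀ i, B i = j → X i ω ≤ c * s i}).toReal ≤ (ℙ Set.univ).toReal :=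
          ENNReal.toReal_mono (measure_ne_top _ _) (measure_mono (Set.subset_univ _))
      _ = 1 := by simp
  have hGpos : ∀ j, ∀ c : ℝ, 0 < c → 0 < G j c := by
    intro j c hc
    have h1 : jointF X (fun i => c * s i) ≤ G j c := by
      rw [jointF]; simp only [hG_def]
      exact ENNReal.toReal_mono (measure_ne_top _ _) (measure_mono fun ω h i _ => h i)
    exact lt_of_lt_of_le (hpos _ fun i => mul_pos hc (hs i)) h1
  -- generic expo identity
  have eGen : ∀ cc : Fin p → ℝ, (∀ k, 0 < cc k) →
      expo X (fun i => cc (B i) * s i) = ∑ k, -Real.log (G k (cc k)) := by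
    intro cc hcc
    rw [expo, hjointG cc, Real.log_prod (fun k _ => (hGpos k _ (hcc k)).ne'),
      Finset.sum_neg_distrib]
  -- pure scaling identity
  have hpure : ∀ c : ℝ, 0 < c → ∑ k, -Real.log (G k c) = c ^ (-1/η) * ∑ k, θ k := by
    intro c hc
    have h0 : expo X (fun i => c * s i) = c ^ (-1/η) * expo X s := hhom c hc s hs
    have e3 : expo X (fun i => c * s i) = ∑ k, -Real.log (G k c) :=
      eGen (fun _ => c) (fun _ => hc)
    have e4 : expo X (fun i => 1 * s i) = ∑ k, -Real.log (G k 1) :=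
      eGen (fun _ => 1) (fun _ => one_pos)
    have hs_eq : (fun i => (1:ℝ) * s i) = s := funext fun i => one_mul _
    rw [hs_eq] at e4
    rw [e3, e4] at h0
    simpa only [hθ_def] using h0
  -- mixed scaling identity
  have hmix : ∀ j : Fin p, ∀ b c : ℝ, 0 < b → 0 < c →
      -Real.log (G j (c * b)) = c ^ (-1/η) * (-Real.log (G j b) - θ j) + -Real.log (G j c) := by
    intro j b c hb hc
    have hcb : ∀ k : Fin p, (0:ℝ) < if k = j then b else 1 := by
      intro k; split <;> [exact hb; exact one_pos]
    have hccb : ∀ k : Fin p, (0:ℝ) < if k = j then c * b else c := by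
      intro k; split <;> [positivity; exact hc]
    have hposT : ∀ i, 0 < (if B i = j then b else 1) * s i := by
      intro i; have := hs i; have := hcb (B i); positivity
    have h1 : expo X (fun i => c * ((if B i = j then b else 1) * s i))
        = c ^ (-1/η) * expo X (fun i => (if B i = j then b else 1) * s i) :=
      hhom c hc _ hposT
    have harg : (fun i => c * ((if B i = j then b else 1) * s i))
        = (fun i => (if B i = j then c * b else c) * s i) := by
      funext i; split <;> ring
    rw [harg] at h1
    have e1 : expo X (fun i => (if B i = j then c * b else c) * s i)
        = ∑ k, -Real.log (G k (if k = j then c * b else c)) :=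
      eGen (fun k => if k = j then c * b else c) hccb
    have e2 : expo X (fun i => (if B i = j then b else 1) * s i)
        = ∑ k, -Real.log (G k (if k = j then b else 1)) :=
      eGen (fun k => if k = j then b else 1) hcb
    rw [e1, e2] at h1
    have split : ∀ f : Fin p → ℝ, ∑ k, f k = f j + ∑ k ∈ Finset.univ.erase j, f k :=
      fun f => (Finset.add_sum_erase Finset.univ f (Finset.mem_univ j)).symm
    have er1 : ∑ k ∈ Finset.univ.erase j, -Real.log (G k (if k = j then c * b else c))
        = ∑ k ∈ Finset.univ.erase j, -Real.log (G k c) :=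
      Finset.sum_congr rfl fun k hk => by rw [if_neg (Finset.ne_of_mem_erase hk)]
    have er2 : ∑ k ∈ Finset.univ.erase j, -Real.log (G k (if k = j then b else 1))
        = ∑ k ∈ Finset.univ.erase j, θ k := by
      exact Finset.sum_congr rfl fun k hk => by rw [if_neg (Finset.ne_of_mem_erase hk)]
    rw [split (fun k => -Real.log (G k (if k = j then c * b else c))),
      split (fun k => -Real.log (G k (if k = j then b else 1))), if_pos rfl, if_pos rfl,
      er1, er2] at h1
    have h2 := hpure c hc
    rw [split (fun k => -Real.log (G k c)), split θ] at h2
    linear_combination h1 - h2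
  -- lower bound for complement
  have hbound : ∀ (j : Fin p) (c' : ℝ), 0 < c' →
      1 - ∑ i ∈ Finset.univ.filter (fun i => B i = j),
        (1 - Real.exp (-σ i * (c' * s i) ^ (-1/η))) ≤ G j c' := by
    intro j c' hc'
    set A := {ω | ∀ i, B i = j → X i ω ≤ c' * s i} with hA_def
    have hAm : MeasurableSet A := by
      have : A = ⋂ i, ⋂ (_ : B i = j), {ω | X i ω ≤ c' * s i} := by
        ext ω; simp [hA_def, Set.mem_iInter]
      rw [this]
      exact MeasurableSet.iInter fun i =>
        MeasurableSet.iInter fun _ => measurableSet_le (hX i) measurable_const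
    have hsub : Aᶜ ⊆ ⋃ i ∈ Finset.univ.filter (fun i => B i = j),
        {ω | c' * s i < X i ω} := by
      intro ω hω
      simp only [hA_def, Set.mem_compl_iff, Set.mem_setOf_eq, not_forall] at hω
      obtain ⟨i, hij, hlt⟩ := hω
      push_neg at hlt
      exact Set.mem_biUnion (Finset.mem_coe.mpr (Finset.mem_filter.mpr ⟨Finset.mem_univ i, hij⟩)) hlt
    have hcompl : ℙ Aᶜ ≤ ∑ i ∈ Finset.univ.filter (fun i => B i = j),
        ℙ {ω | c' * s i < X i ω} :=
      le_trans (measure_mono hsub) (measure_biUnion_finset_le _ _)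
    have hterm : ∀ i, (ℙ {ω | c' * s i < X i ω}).toReal
        = 1 - Real.exp (-σ i * (c' * s i) ^ (-1/η)) := by
      intro i
      have hpos' : 0 < c' * s i := by have := hs i; positivity
      have hset : {ω | c' * s i < X i ω} = {ω | X i ω ≤ c' * s i}ᶜ := by
        ext ω; simp [not_le]
      rw [hset, prob_compl_eq_one_sub (measurableSet_le (hX i) measurable_const),
        hmarg i _ hpos',
        ENNReal.toReal_sub_of_le (by
          rw [← ENNReal.ofReal_one]
          exact ENNReal.ofReal_le_ofReal (Real.exp_le_one_iff.mpr (by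
            have h1 : 0 < (c' * s i) ^ (-1/η) := Real.rpow_pos_of_pos hpos' _
            have := hσ i
            nlinarith))) ENNReal.one_ne_top,
        ENNReal.toReal_one, ENNReal.toReal_ofReal (Real.exp_nonneg _)]
    have htoReal : (ℙ Aᶜ).toReal ≤ ∑ i ∈ Finset.univ.filter (fun i => B i = j),
        (1 - Real.exp (-σ i * (c' * s i) ^ (-1/η))) := by
      calc (ℙ Aᶜ).toReal
          ≤ (∑ i ∈ Finset.univ.filter (fun i => B i = j),
              ℙ {ω | c' * s i < X i ω}).toReal := by
            apply ENNReal.toReal_mono _ hcompl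
            exact (ENNReal.sum_lt_top.mpr fun i _ => measure_lt_top _ _).ne
        _ = ∑ i ∈ Finset.univ.filter (fun i => B i = j),
              (ℙ {ω | c' * s i < X i ω}).toReal :=
            ENNReal.toReal_sum fun i _ => measure_ne_top _ _
        _ = ∑ i ∈ Finset.univ.filter (fun i => B i = j),
              (1 - Real.exp (-σ i * (c' * s i) ^ (-1/η))) :=
            Finset.sum_congr rfl fun i _ => hterm i
    have hAc : (ℙ Aᶜ).toReal = 1 - G j c' := by
      rw [prob_compl_eq_one_sub hAm,
        ENNReal.toReal_sub_of_le prob_le_one ENNReal.one_ne_top, ENNReal.toReal_one]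
    rw [hAc] at htoReal
    linarith
  -- limit of G along multiples
  have hGlim : ∀ (j : Fin p) (c : ℝ), 0 < c →
      Tendsto (fun n : ℕ => G j (c * n)) atTop (𝓝 1) := by
    intro j c hc
    have hlow : Tendsto (fun n : ℕ => 1 - ∑ i ∈ Finset.univ.filter (fun i => B i = j),
        (1 - Real.exp (-σ i * (c * (n:ℝ) * s i) ^ (-1/η)))) atTop (𝓝 1) := by
      have hsum : Tendsto (fun n : ℕ => ∑ i ∈ Finset.univ.filter (fun i => B i = j),
          (1 - Real.exp (-σ i * (c * (n:ℝ) * s i) ^ (-1/η)))) atTop (𝓝 0) := by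
        have : (0:ℝ) = ∑ i ∈ Finset.univ.filter (fun i => B i = j), (0:ℝ) := by simp
        rw [this]
        apply tendsto_finset_sum
        intro i _
        have hbase : Tendsto (fun n : ℕ => c * (n:ℝ) * s i) atTop atTop :=
          (tendsto_natCast_atTop_atTop.const_mul_atTop hc).atTop_mul_const (hs i)
        have hrpow : Tendsto (fun n : ℕ => (c * (n:ℝ) * s i) ^ (-1/η)) atTop (𝓝 0) := by
          have h1 : Tendsto (fun x : ℝ => x ^ (-(1/η))) atTop (𝓝 0) :=
            tendsto_rpow_neg_atTop hη'
          have h2 := h1.comp hbase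
          simpa [neg_div, Function.comp_def] using h2
        have hmul : Tendsto (fun n : ℕ => -σ i * (c * (n:ℝ) * s i) ^ (-1/η)) atTop (𝓝 0) := by
          have := hrpow.const_mul (-σ i)
          simpa using this
        have hexp : Tendsto (fun n : ℕ => Real.exp (-σ i * (c * (n:ℝ) * s i) ^ (-1/η)))
            atTop (𝓝 1) := by
          have := (Real.continuous_exp.tendsto 0).comp hmul
          simpa [Function.comp_def] using this
        have := hexp.const_sub 1
        simpa using this
      have := hsum.const_sub 1
      simpa using this
    have hup : Tendsto (fun _ : ℕ => (1:ℝ)) atTop (𝓝 1) := tendsto_const_nhds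
    refine tendsto_of_tendsto_of_tendsto_of_le_of_le' hlow hup ?_ ?_
    · filter_upwards [eventually_ge_atTop 1] with n hn
      have hn' : (0:ℝ) < c * n := by
        have : (1:ℝ) ≤ (n:ℝ) := by exact_mod_cast hn
        nlinarith
      exact hbound j (c * n) hn'
    · exact Filter.Eventually.of_forall fun n => hGle1 j _
  -- the functional equation solution
  have hGlog : ∀ (j : Fin p) (c : ℝ), 0 < c → -Real.log (G j c) = c ^ (-1/η) * θ j := by
    intro j c hc
    have h1 : Tendsto (fun n : ℕ => -Real.log (G j (c * n))) atTop (𝓝 0) := by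
      have := (Real.continuousAt_log one_ne_zero).tendsto.comp (hGlim j c hc)
      have h2 : Tendsto (fun n : ℕ => Real.log (G j (c * n))) atTop (𝓝 0) := by
        simpa [Function.comp_def] using this
      simpa using h2.neg
    have h2 : Tendsto (fun n : ℕ => c ^ (-1/η) * (-Real.log (G j ((1:ℝ) * n)) - θ j)
        + -Real.log (G j c)) atTop (𝓝 (c ^ (-1/η) * (0 - θ j) + -Real.log (G j c))) := by
      have h3 : Tendsto (fun n : ℕ => -Real.log (G j ((1:ℝ) * n))) atTop (𝓝 0) := by
        have := (Real.continuousAt_log one_ne_zero).tendsto.comp (hGlim j 1 one_pos)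
        have h4 : Tendsto (fun n : ℕ => Real.log (G j ((1:ℝ) * n))) atTop (𝓝 0) := by
          simpa [Function.comp_def] using this
        simpa using h4.neg
      exact (((h3.sub_const (θ j)).const_mul _).add_const _)
    have heq : (fun n : ℕ => c ^ (-1/η) * (-Real.log (G j ((1:ℝ) * n)) - θ j)
        + -Real.log (G j c)) =ᶠ[atTop] (fun n : ℕ => -Real.log (G j (c * n))) := by
      filter_upwards [eventually_ge_atTop 1] with n hn
      have hb : (0:ℝ) < n := by exact_mod_cast Nat.lt_of_lt_of_le Nat.zero_lt_one hn
      have := hmix j n c hb hc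
      rw [one_mul]
      exact this.symm
    have huniq := tendsto_nhds_unique (h2.congr' heq) h1
    linarith [huniq]
  have hGval : ∀ (j : Fin p) (c : ℝ), 0 < c → G j c = Real.exp (-(c ^ (-1/η) * θ j)) := by
    intro j c hc
    rw [← hGlog j c hc, neg_neg, Real.exp_log (hGpos j c hc)]
  -- θ j ≥ 1
  have hθge1 : ∀ j, 1 ≤ θ j := by
    intro j
    obtain ⟨i0, hi0⟩ := hB j
    have hsub : {ω | ∀ i, B i = j → X i ω ≤ 1 * s i} ⊆ {ω | X i0 ω ≤ 1 * s i0} :=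
      fun ω h => h i0 hi0
    have h1 : G j 1 ≤ (ℙ {ω | X i0 ω ≤ 1 * s i0}).toReal := by
      simp only [hG_def]
      exact ENNReal.toReal_mono (measure_ne_top _ _) (measure_mono hsub)
    have h2 : (ℙ {ω | X i0 ω ≤ 1 * s i0}).toReal = Real.exp (-1) := by
      rw [hmarg i0 (1 * s i0) (by have := hs i0; linarith [one_mul (s i0)] ),
        ENNReal.toReal_ofReal (Real.exp_nonneg _)]
      congr 1
      rw [one_mul]
      simp only [hs_def]
      have hx : ((σ i0 ^ η : ℝ)) ^ (-1/η) = (σ i0)⁻¹ := by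
        rw [← Real.rpow_mul (hσ i0).le]
        have hx2 : η * (-1/η) = -1 := by field_simp
        rw [hx2, Real.rpow_neg_one]
      rw [hx]
      field_simp
      rw [div_self (hσ i0).ne']
    have h3 : Real.log (G j 1) ≤ -1 := by
      have h4 : Real.log (G j 1) ≤ Real.log (Real.exp (-1)) :=
        (Real.log_le_log_iff (hGpos j 1 one_pos) (Real.exp_pos _)).mpr (h1.trans h2.le)
      rwa [Real.log_exp] at h4
    simp only [hθ_def]
    linarith
  have hθpos : ∀ j, 0 < θ j := fun j => lt_of_lt_of_le one_pos (hθge1 j)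
  -- the standard form of G at CDF points
  have hGstd : ∀ (j : Fin p) (w : ℝ), 0 < w → w < 1 →
      G j ((-Real.log w) ^ (-η)) = w ^ θ j := by
    intro j w hw0 hw1
    have hlw : 0 < -Real.log w := by have := Real.log_neg hw0 hw1; linarith
    have hcw : 0 < (-Real.log w) ^ (-η) := Real.rpow_pos_of_pos hlw _
    rw [hGval j _ hcw]
    have hcc : (((-Real.log w) ^ (-η) : ℝ)) ^ (-1/η) = -Real.log w := by
      rw [← Real.rpow_mul hlw.le]
      have hx : (-η) * (-1/η) = 1 := by field_simp
      rw [hx, Real.rpow_one]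
    rw [hcc, Real.rpow_def_of_pos hw0]
    congr 1
    ring
  -- block maxima as finite sups
  have hMrepr : ∀ (j : Fin p) (ω : Ω), blockMax B σ η X j ω
      = (Finset.univ.filter fun i => B i = j).sup' (hne j)
        (fun i => margF (σ i) η (X i ω)) := by
    intro j ω
    rw [Finset.sup'_eq_csSup_image, blockMax]
    congr 1
    congr 1
    ext i
    simp
  have hM0 : ∀ (j : Fin p) (ω : Ω), 0 ≤ blockMax B σ η X j ω := by
    intro j ω
    rw [hMrepr j ω]
    obtain ⟨i0, hi0⟩ := hne j
    exact le_trans (margF_nonneg (σ i0) η (X i0 ω)) (Finset.le_sup' (fun i => margF (σ i) η (X i ω)) hi0)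
  have hM1 : ∀ (j : Fin p) (ω : Ω), blockMax B σ η X j ω ≤ 1 := by
    intro j ω
    rw [hMrepr j ω]
    exact Finset.sup'_le _ _ fun i _ => (margF_lt_one (hσ i) hη0 _).le
  have hmargmeas : ∀ i : Fin d, Measurable (margF (σ i) η) := by
    intro i
    unfold margF
    refine Measurable.ite (measurableSet_lt measurable_const measurable_id) ?_ measurable_const
    exact (Real.measurable_exp.comp (measurable_const.mul
      (measurable_id.pow measurable_const)))
  have hMmeas : ∀ j : Fin p, Measurable (blockMax B σ η X j) := by
    intro j
    have heq : blockMax B σ η X j = fun ω =>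
        (Finset.univ.filter fun i => B i = j).sup' (hne j)
          (fun i => margF (σ i) η (X i ω)) := funext (hMrepr j)
    rw [heq]
    have := Finset.measurable_sup' (hne j)
      (f := fun i (ω : Ω) => margF (σ i) η (X i ω))
      (fun i _ => (hmargmeas i).comp (hX i))
    convert this using 1
    funext ω
    rw [Finset.sup'_apply]
  -- CDF of blockMax
  have hMcdf : ∀ (j : Fin p) (u : ℝ), 0 < u → u < 1 →
      (ℙ {ω | blockMax B σ η X j ω ≤ u}).toReal = u ^ θ j := by
    intro j u hu0 hu1
    have hset : {ω | blockMax B σ η X j ω ≤ u}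
        = {ω | ∀ i, B i = j → X i ω ≤ (-Real.log u) ^ (-η) * s i} := by
      ext ω
      simp only [Set.mem_setOf_eq]
      rw [hMrepr j ω, Finset.sup'_le_iff]
      constructor
      · intro h i hij
        have hm := h i (Finset.mem_filter.mpr ⟨Finset.mem_univ i, hij⟩)
        have h5 := (margF_le_iff (hσ i) hη0 hu0 hu1 (X i ω)).mp hm
        simpa only [hs_def] using h5
      · intro h i hi
        rw [Finset.mem_filter] at hi
        refine (margF_le_iff (hσ i) hη0 hu0 hu1 (X i ω)).mpr ?_
        have h5 := h i hi.2
        simpa only [hs_def] using h5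
    rw [hset]
    have hGq : (ℙ {ω | ∀ i, B i = j → X i ω ≤ (-Real.log u) ^ (-η) * s i}).toReal
        = G j ((-Real.log u) ^ (-η)) := by simp only [hG_def]
    rw [hGq, hGstd j u hu0 hu1]
  -- boundedness of the iSup family
  have hbddY : ∀ ω : Ω, BddAbove (Set.range fun j => blockMax B σ η X j ω ^ l j) :=
    fun ω => Set.Finite.bddAbove (Set.finite_range _)
  -- CDF of the weighted max
  have hYcdf : ∀ u : ℝ, 0 < u → u < 1 →
      (ℙ {ω | (⨆ j, blockMax B σ η X j ω ^ l j) ≤ u}).toReal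
        = u ^ (∑ j, (l j)⁻¹ * θ j) := by
    intro u hu0 hu1
    set v : Fin p → ℝ := fun j => u ^ (l j)⁻¹ with hv_def
    have hv0 : ∀ j, 0 < v j := fun j => Real.rpow_pos_of_pos hu0 _
    have hv1 : ∀ j, v j < 1 := fun j =>
      Real.rpow_lt_one hu0.le hu1 (inv_pos.mpr (hl j))
    have hset : {ω | (⨆ j, blockMax B σ η X j ω ^ l j) ≤ u}
        = {ω | ∀ i, X i ω ≤ (fun j => (-Real.log (v j)) ^ (-η)) (B i) * s i} := by
      ext ω
      simp only [Set.mem_setOf_eq]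
      rw [ciSup_le_iff (hbddY ω)]
      constructor
      · intro h i
        have h1 : blockMax B σ η X (B i) ω ≤ v (B i) := by
          rw [hv_def]
          exact (Real.le_rpow_inv_iff_of_pos (hM0 (B i) ω) hu0.le (hl (B i))).mpr (h (B i))
        rw [hMrepr (B i) ω, Finset.sup'_le_iff] at h1
        have h2 := h1 i (Finset.mem_filter.mpr ⟨Finset.mem_univ i, rfl⟩)
        have h3 := (margF_le_iff (hσ i) hη0 (hv0 (B i)) (hv1 (B i)) (X i ω)).mp h2
        simpa only [hs_def] using h3
      · intro h j
        have h1 : blockMax B σ η X j ω ≤ v j := by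
          rw [hMrepr j ω]
          refine Finset.sup'_le _ _ fun i hi => ?_
          rw [Finset.mem_filter] at hi
          refine (margF_le_iff (hσ i) hη0 (hv0 j) (hv1 j) (X i ω)).mpr ?_
          have h5 := h i
          rw [hi.2] at h5
          simpa only [hs_def] using h5
        have := (Real.le_rpow_inv_iff_of_pos (hM0 j ω) hu0.le (hl j)).mp (by
          rw [hv_def] at h1; exact h1)
        exact this
    rw [hset]
    have hjq : (ℙ {ω | ∀ i, X i ω ≤ (fun j => (-Real.log (v j)) ^ (-η)) (B i) * s i}).toReal
        = jointF X (fun i => (fun j => (-Real.log (v j)) ^ (-η)) (B i) * s i) := rfl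
    rw [hjq, hjointG (fun j => (-Real.log (v j)) ^ (-η))]
    have hfac : ∀ j : Fin p, G j ((-Real.log (v j)) ^ (-η)) = u ^ ((l j)⁻¹ * θ j) := by
      intro j
      rw [hGstd j (v j) (hv0 j) (hv1 j), hv_def]
      rw [← Real.rpow_mul hu0.le]
    rw [Finset.prod_congr rfl fun j _ => hfac j, ← Real.rpow_sum_of_pos hu0]
  -- integral computations
  have hTpos : 0 < ∑ j, (l j)⁻¹ * θ j := by
    refine Finset.sum_pos (fun j _ => mul_pos (inv_pos.mpr (hl j)) (hθpos j)) ?_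
    exact ⟨Classical.arbitrary (Fin p), Finset.mem_univ _⟩
  have hYmeas : Measurable fun ω => ⨆ j, blockMax B σ η X j ω ^ l j :=
    Measurable.iSup fun j => (hMmeas j).pow measurable_const
  have hY0 : ∀ ω, 0 ≤ ⨆ j, blockMax B σ η X j ω ^ l j := by
    intro ω
    obtain ⟨j0⟩ := hpne
    exact le_trans (Real.rpow_nonneg (hM0 j0 ω) _) (le_ciSup (hbddY ω) j0)
  have hY1 : ∀ ω, (⨆ j, blockMax B σ η X j ω ^ l j) ≤ 1 := by
    intro ω
    exact ciSup_le fun j => Real.rpow_le_one (hM0 j ω) (hM1 j ω) (hl j).le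
  have hYint : (∫ ω, ⨆ j, blockMax B σ η X j ω ^ l j ∂ℙ)
      = (∑ j, (l j)⁻¹ * θ j) / ((∑ j, (l j)⁻¹ * θ j) + 1) :=
    integral_of_cdf_rpow hYmeas hY0 hY1 hTpos hYcdf
  have hMint : ∀ j : Fin p, (∫ ω, blockMax B σ η X j ω ^ (1:ℝ) ∂ℙ) = θ j / (θ j + 1) := by
    intro j
    have heq1 : (fun ω => blockMax B σ η X j ω ^ (1:ℝ)) = blockMax B σ η X j :=
      funext fun ω => Real.rpow_one _
    rw [heq1]
    exact integral_of_cdf_rpow (hMmeas j) (hM0 j) (hM1 j) (hθpos j) (hMcdf j)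
  -- final arithmetic
  have harith : ∀ x : ℝ, 0 < x → x / (x + 1) / (1 - x / (x + 1)) = x := by
    intro x hx
    have hx1 : x + 1 ≠ 0 := by positivity
    have h1 : 1 - x / (x + 1) = 1 / (x + 1) := by field_simp; ring
    rw [h1]
    field_simp
  have hEps : ∀ j : Fin p, epsBlock B σ η X j 1 = θ j := by
    intro j
    rw [epsBlock, hMint j]
    exact harith (θ j) (hθpos j)
  rw [epsFun, hYint, harith _ hTpos]
  exact Finset.sum_congr rfl fun j _ => by rw [hEps j]
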